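/- For odd n ≥ 5, the automaton ℱ_n is synchronizing, the word (a b^{n-2})^{n-2} a of length n² - 3n + 3 resets it, and its reset threshold is exactly n² - 3n + 3. -/

import Mathlib

/-- The state reached from `q` by reading the word `w`. -/
def run {Q A : Type*} (δ : Q → A → Q) (q : Q) (w : List A) : Q := w.foldl δ q

/-- The automaton `ℱ_n` on states `0,…,n-1` (paper's `1,…,n` shifted by one):
the letter `a` (= `true`) fixes all states except `n-1 ↦ 1`;
the letter `b` (= `false`) is the cyclic shift `i ↦ i+1 (mod n)`. -/
def fAut (n : ℕ) (q : ZMod n) : Bool → ZMod n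
  | true => if q.val = n - 1 then 1 else q
  | false => q + 1

section Aux
variable {n : ℕ}

lemma cast_sub' (_ : 5 ≤ n) {k : ℕ} (hk : k ≤ n) : ((n - k : ℕ) : ZMod n) = -(k : ZMod n) := by
  rw [Nat.cast_sub hk, ZMod.natCast_self, zero_sub]

lemma val_neg_one (hn : 5 ≤ n) : (-1 : ZMod n).val = n - 1 := by
  haveI : NeZero n := ⟨by omega⟩
  rw [← show ((n - 1 : ℕ) : ZMod n) = -1 by rw [cast_sub' hn (by omega)]; norm_num,
    ZMod.val_cast_of_lt (by omega)]

lemma eq_neg_one_iff (hn : 5 ≤ n) (q : ZMod n) : q.val = n - 1 ↔ q = -1 := by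
  haveI : NeZero n := ⟨by omega⟩
  constructor
  · intro h
    have : ((q.val : ℕ) : ZMod n) = ((n - 1 : ℕ) : ZMod n) := by rw [h]
    rwa [ZMod.natCast_val, ZMod.cast_id, cast_sub' hn (by omega), Nat.cast_one] at this
  · intro h; rw [h, val_neg_one hn]

lemma fAut_true (hn : 5 ≤ n) (q : ZMod n) :
    fAut n q true = if q = -1 then 1 else q := by
  show (if q.val = n - 1 then 1 else q) = _
  simp only [eq_neg_one_iff hn]

lemma run_cons {Q A : Type*} (δ : Q → A → Q) (q : Q) (x : A) (xs : List A) :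
    run δ q (x :: xs) = run δ (δ q x) xs := rfl

lemma run_append {Q A : Type*} (δ : Q → A → Q) (q : Q) (l1 l2 : List A) :
    run δ q (l1 ++ l2) = run δ (run δ q l1) l2 := List.foldl_append ..

lemma run_replicate_false (m : ℕ) (q : ZMod n) :
    run (fAut n) q (List.replicate m false) = q + m := by
  induction m generalizing q with
  | zero => simp [run]
  | succ m ih =>
    rw [List.replicate_succ, run_cons]
    show run (fAut n) (q + 1) _ = _
    rw [ih]; push_cast; ring

lemma one_ne_neg_one (hn : 5 ≤ n) : (1 : ZMod n) ≠ -1 := by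
  haveI : NeZero n := ⟨by omega⟩
  intro h
  have h2 : ((2 : ℕ) : ZMod n) = 0 := by push_cast; linear_combination h
  have hv := ZMod.val_cast_of_lt (show (2:ℕ) < n by omega)
  rw [h2] at hv
  simp at hv

noncomputable def inv2 (n : ℕ) : ZMod n := (((n + 1) / 2 : ℕ) : ZMod n)

lemma two_mul_inv2 (hodd : Odd n) : (2 : ZMod n) * inv2 n = 1 := by
  have h : 2 * ((n + 1) / 2) = n + 1 := by
    obtain ⟨k, rfl⟩ := hodd; omega
  have : (((2 * ((n + 1) / 2)) : ℕ) : ZMod n) = ((n + 1 : ℕ) : ZMod n) := by rw [h]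
  push_cast at this
  simpa [ZMod.natCast_self, inv2] using this

noncomputable def hit (n : ℕ) (q : ZMod n) : ℕ := ((q + 1) * inv2 n).val

lemma hit_lt (hn : 5 ≤ n) (q : ZMod n) : hit n q < n := by
  haveI : NeZero n := ⟨by omega⟩
  exact ZMod.val_lt _

lemma hit_cast (hn : 5 ≤ n) (q : ZMod n) :
    ((hit n q : ℕ) : ZMod n) = (q + 1) * inv2 n := by
  haveI : NeZero n := ⟨by omega⟩
  exact ZMod.natCast_rightInverse _

lemma hit_eq_zero_iff (hodd : Odd n) (hn : 5 ≤ n) (q : ZMod n) :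
    hit n q = 0 ↔ q = -1 := by
  haveI : NeZero n := ⟨by omega⟩
  have t := two_mul_inv2 (n := n) hodd
  rw [hit, ZMod.val_eq_zero]
  constructor
  · intro h
    linear_combination 2 * h - (q + 1) * t
  · intro h; rw [h]; ring

lemma hit_succ (hodd : Odd n) (hn : 5 ≤ n) (q : ZMod n) (k : ℕ) (h : hit n q = k + 1) :
    q - 2 * k = 1 := by
  haveI : NeZero n := ⟨by omega⟩
  have t := two_mul_inv2 (n := n) hodd
  have h1 : ((k + 1 : ℕ) : ZMod n) = (q + 1) * inv2 n := by rw [← h, hit_cast hn]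
  push_cast at h1
  linear_combination (-2 : ZMod n) * h1 - (q + 1) * t

lemma hit_gt (hodd : Odd n) (hn : 5 ≤ n) (q : ZMod n) (k : ℕ) (h : k < hit n q) :
    q - 2 * k ≠ -1 := by
  haveI : NeZero n := ⟨by omega⟩
  intro he
  have t := two_mul_inv2 (n := n) hodd
  have h2 : (q + 1) * inv2 n = (k : ZMod n) := by
    linear_combination inv2 n * he + (k : ZMod n) * t
  have h3 : hit n q = k % n := by rw [hit, h2, ZMod.val_natCast]
  have := Nat.mod_le k n
  omega

noncomputable def F (n : ℕ) (q : ZMod n) : ZMod n :=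
  run (fAut n) q (true :: List.replicate (n - 2) false)

lemma F_eq (hn : 5 ≤ n) (q : ZMod n) : F n q = if q = -1 then -1 else q - 2 := by
  rw [F, run_cons, fAut_true hn, run_replicate_false]
  split
  · rw [cast_sub' hn (by omega)]; push_cast; ring
  · rw [cast_sub' hn (by omega)]; push_cast; ring

lemma F_iter (hodd : Odd n) (hn : 5 ≤ n) (q : ZMod n) : ∀ k : ℕ,
    (F n)^[k] q = if hit n q ≤ k then -1 else q - 2 * k := by
  intro k
  induction k with
  | zero =>
    simp only [Function.iterate_zero, id_eq, Nat.le_zero, hit_eq_zero_iff hodd hn]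
    split
    · next h => rw [h]
    · push_cast; ring
  | succ k ih =>
    rw [Function.iterate_succ_apply', ih]
    by_cases h1 : hit n q ≤ k
    · rw [if_pos h1, if_pos (by omega), F_eq hn, if_pos rfl]
    · rw [if_neg h1, F_eq hn, if_neg (hit_gt hodd hn q k (by omega))]
      by_cases h2 : hit n q = k + 1
      · rw [if_pos (by omega), hit_succ hodd hn q k h2]
        ring
      · rw [if_neg (by omega)]
        push_cast; ring

lemma run_flatten (hn : 5 ≤ n) (k : ℕ) (q : ZMod n) :
    run (fAut n) q (List.replicate k (true :: List.replicate (n - 2) false)).flatten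
      = (F n)^[k] q := by
  induction k generalizing q with
  | zero => simp [run]
  | succ k ih =>
    rw [List.replicate_succ, List.flatten_cons, run_append, Function.iterate_succ_apply]
    rw [ih]; rfl

lemma upper (hodd : Odd n) (hn : 5 ≤ n) (q : ZMod n) :
    run (fAut n) q
      ((List.replicate (n - 2) (true :: List.replicate (n - 2) false)).flatten ++ [true])
      = 1 := by
  rw [run_append, run_flatten hn, F_iter hodd hn]
  by_cases h : hit n q ≤ n - 2
  · rw [if_pos h]
    show fAut n (-1) true = 1
    rw [fAut_true hn, if_pos rfl]
  · rw [if_neg h]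
    have hl := hit_lt hn q
    have : hit n q = (n - 2) + 1 := by omega
    rw [hit_succ hodd hn q (n-2) this]
    show fAut n 1 true = 1
    rw [fAut_true hn, if_neg (one_ne_neg_one hn)]

/-- number of jump-steps (`a` applied while at `-1`) along the trajectory of `q`. -/
def Jc (n : ℕ) : ZMod n → List Bool → ℕ
  | _, [] => 0
  | q, x :: xs => (if x = true ∧ q.val = n - 1 then 1 else 0) + Jc n (fAut n q x) xs

lemma Jc_nil (q : ZMod n) : Jc n q [] = 0 := rfl
lemma Jc_cons (q : ZMod n) (x : Bool) (xs : List Bool) :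
    Jc n q (x :: xs) = (if x = true ∧ q.val = n - 1 then 1 else 0) + Jc n (fAut n q x) xs := rfl

/-- fundamental displacement equation -/
lemma run_eq (hn : 5 ≤ n) : ∀ (v : List Bool) (q : ZMod n),
    run (fAut n) q v = q + (v.count false : ℕ) + 2 * (Jc n q v : ℕ) := by
  intro v
  induction v with
  | nil => intro q; simp [run, Jc_nil]
  | cons x xs ih =>
    intro q
    rw [run_cons, Jc_cons, ih]
    cases x with
    | false =>
      have hc : (false :: xs).count false = xs.count false + 1 := by simp
      rw [hc, if_neg (by simp), show fAut n q false = q + 1 from rfl]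
      push_cast
      ring
    | true =>
      have hc : (true :: xs).count false = xs.count false := by simp
      rw [hc]
      by_cases h : q = -1
      · rw [if_pos ⟨rfl, (eq_neg_one_iff hn q).mpr h⟩,
          show fAut n q true = 1 from by rw [fAut_true hn, if_pos h], h]
        push_cast; ring
      · rw [if_neg (fun hcon => h ((eq_neg_one_iff hn q).mp hcon.2)),
          show fAut n q true = q from by rw [fAut_true hn, if_neg h]]
        push_cast; ring

lemma Jc_le_count_true : ∀ (v : List Bool) (q : ZMod n), Jc n q v ≤ v.count true := by
  intro v
  induction v with
  | nil => intro q; simp [Jc_nil]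
  | cons x xs ih =>
    intro q
    rw [Jc_cons]
    have := ih (fAut n q x)
    cases x with
    | false =>
      have hc : (false :: xs).count true = xs.count true := by simp
      rw [hc, if_neg (by simp)]
      simpa using this
    | true =>
      have hc : (true :: xs).count true = xs.count true + 1 := by simp
      rw [hc]
      split <;> omega

lemma val_sub_one (hn : 5 ≤ n) {x : ZMod n} (hx : x ≠ 0) : (x - 1).val = x.val - 1 := by
  haveI : NeZero n := ⟨by omega⟩
  have h1 : 1 ≤ x.val := by
    rcases Nat.eq_zero_or_pos x.val with h | h
    · exact absurd ((ZMod.val_eq_zero x).mp h) hx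
    · omega
  have h2 : x - 1 = ((x.val - 1 : ℕ) : ZMod n) := by
    rw [Nat.cast_sub h1, ZMod.natCast_val, ZMod.cast_id, Nat.cast_one]
  rw [h2, ZMod.val_cast_of_lt (by have := ZMod.val_lt x; omega)]

lemma count_false_bound (hn : 5 ≤ n) : ∀ (v : List Bool) (q : ZMod n),
    1 ≤ Jc n q v →
    (-1 - q).val + (Jc n q v - 1) * (n - 2) ≤ v.count false := by
  intro v
  induction v with
  | nil => intro q h; rw [Jc_nil] at h; omega
  | cons x xs ih =>
    intro q hJ
    haveI : NeZero n := ⟨by omega⟩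
    cases x with
    | false =>
      rw [Jc_cons, if_neg (by simp)] at hJ ⊢
      simp only [zero_add] at hJ ⊢
      have key := ih (fAut n q false) hJ
      show (-1 - q).val + (Jc n (q+1) xs - 1) * (n-2) ≤ (false :: xs).count false
      have hc : (false :: xs).count false = xs.count false + 1 := by
        simp [List.count_cons]
      rw [hc]
      by_cases h : q = -1
      · have h0 : (-1 - q).val = 0 := by rw [h]; simp
        rw [h0]
        have : (-1 - (q + 1)).val + (Jc n (q+1) xs - 1) * (n-2) ≤ xs.count false := key
        omega
      · have hx : (-1 : ZMod n) - q ≠ 0 := by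
          intro h0; apply h; linear_combination -h0
        have he : (-1 : ZMod n) - (q + 1) = (-1 - q) - 1 := by ring
        have : (-1 - (q + 1) : ZMod n).val = (-1 - q).val - 1 := by
          rw [he, val_sub_one hn hx]
        have h1 : 1 ≤ (-1 - q : ZMod n).val := by
          rcases Nat.eq_zero_or_pos (-1 - q : ZMod n).val with h' | h'
          · exact absurd ((ZMod.val_eq_zero _).mp h') hx
          · omega
        have key' := key
        rw [show fAut n q false = q + 1 from rfl] at key'
        omega
    | true =>
      rw [Jc_cons] at hJ ⊢
      by_cases h : q = -1
      · have hval : q.val = n - 1 := (eq_neg_one_iff hn q).mpr h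
        rw [if_pos ⟨rfl, hval⟩] at hJ ⊢
        have hF : fAut n q true = 1 := by rw [fAut_true hn, if_pos h]
        have h0 : (-1 - q).val = 0 := by rw [h]; simp
        rw [hF] at hJ ⊢
        have hc : (true :: xs).count false = xs.count false := by simp [List.count_cons]
        rw [hc, h0]
        by_cases hJ' : 1 ≤ Jc n 1 xs
        · have key := ih 1 hJ'
          have hd : ((-1 : ZMod n) - 1).val = n - 2 := by
            rw [show (-1 : ZMod n) - 1 = ((n - 2 : ℕ) : ZMod n) by
              rw [cast_sub' hn (by omega)]; push_cast; ring]
            rw [ZMod.val_cast_of_lt (by omega)]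
          rw [hd] at key
          obtain ⟨m, hm⟩ : ∃ m, Jc n 1 xs = m + 1 := ⟨Jc n 1 xs - 1, by omega⟩
          rw [hm] at key ⊢
          have e0 : 1 + (m + 1) - 1 = m + 1 := by omega
          have e1 : m + 1 - 1 = m := by omega
          rw [e0]
          rw [e1] at key
          have e2 : (m + 1) * (n - 2) = m * (n - 2) + (n - 2) := by
            rw [add_mul, one_mul]
          rw [e2]
          generalize m * (n - 2) = M at key ⊢
          omega
        · have : Jc n 1 xs = 0 := by omega
          rw [this]
          simp
      · have hval : ¬ (q.val = n - 1) := fun hc => h ((eq_neg_one_iff hn q).mp hc)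
        rw [if_neg (by simp [hval])] at hJ ⊢
        have hF : fAut n q true = q := by rw [fAut_true hn, if_neg h]
        rw [hF] at hJ ⊢
        simp only [zero_add] at hJ ⊢
        have key := ih q hJ
        have hc : (true :: xs).count false = xs.count false := by simp [List.count_cons]
        omega

lemma count_add_count (v : List Bool) : v.count true + v.count false = v.length := by
  induction v with
  | nil => simp
  | cons x xs ih => cases x <;> simp [List.count_cons] <;> omega

lemma lower (hodd : Odd n) (hn : 5 ≤ n) (v : List Bool) (p : ZMod n)
    (hp : ∀ q, run (fAut n) q v = p) : n ^ 2 - 3 * n + 3 ≤ v.length := by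
  haveI : NeZero n := ⟨by omega⟩
  set q₀ : ZMod n := p - (v.count false : ℕ) + 2 with hq₀
  have e := hp q₀
  rw [run_eq hn v q₀] at e
  have hcast : ((2 * Jc n q₀ v : ℕ) : ZMod n) = ((2 * (n - 1) : ℕ) : ZMod n) := by
    push_cast [Nat.cast_sub (show 1 ≤ n by omega)]
    rw [ZMod.natCast_self]
    rw [hq₀] at e
    push_cast at e
    linear_combination e
  have hmod : 2 * Jc n q₀ v ≡ 2 * (n - 1) [MOD n] :=
    (ZMod.natCast_eq_natCast_iff _ _ _).mp hcast
  have hcop : Nat.gcd n 2 = 1 := Nat.coprime_two_right.mpr hodd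
  have hmod2 : Jc n q₀ v ≡ (n - 1) [MOD n] := hmod.cancel_left_of_coprime hcop
  have hJ : n - 1 ≤ Jc n q₀ v := by
    have h1 : Jc n q₀ v % n = (n - 1) % n := hmod2
    have h2 : (n - 1) % n = n - 1 := Nat.mod_eq_of_lt (by omega)
    have := Nat.mod_le (Jc n q₀ v) n
    omega
  have hA := Jc_le_count_true v q₀
  have hB := count_false_bound hn v q₀ (by omega)
  have hlen := count_add_count v
  set J := Jc n q₀ v with hJdef
  have hmul : (n - 2) * (n - 2) ≤ (J - 1) * (n - 2) :=
    Nat.mul_le_mul_right _ (by omega)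
  obtain ⟨m, rfl⟩ : ∃ m, n = m + 2 := ⟨n - 2, by omega⟩
  have hsq : (m + 2) ^ 2 = m * m + 4 * m + 4 := by ring
  simp only [show m + 2 - 2 = m from by omega] at hmul hB
  rw [hsq]
  have h3m : 3 * m ≤ m * m := Nat.mul_le_mul_right m (by omega)
  generalize m * m = M at hmul h3m ⊢
  generalize (J - 1) * m = K at hmul hB
  omega

end Aux

/-- For odd `n ≥ 5`, the automaton `ℱ_n` is synchronizing, the word `(a b^{n-2})^{n-2} a`
of length `n² - 3n + 3` resets it, and its reset threshold is exactly `n² - 3n + 3`. -/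
theorem stmt_16 (n : ℕ) (hodd : Odd n) (hn : 5 ≤ n) :
    let w : List Bool :=
      (List.replicate (n - 2) (true :: List.replicate (n - 2) false)).flatten ++ [true]
    w.length = n ^ 2 - 3 * n + 3 ∧
    (∃ p : ZMod n, ∀ q, run (fAut n) q w = p) ∧
    (∀ v : List Bool, (∃ p : ZMod n, ∀ q, run (fAut n) q v = p) →
      n ^ 2 - 3 * n + 3 ≤ v.length) := by
  intro w
  refine ⟨?_, ⟨1, fun q => upper hodd hn q⟩, fun v ⟨p, hp⟩ => lower hodd hn v p hp⟩
  show ((List.replicate (n - 2) (true :: List.replicate (n - 2) false)).flatten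
      ++ [true]).length = n ^ 2 - 3 * n + 3
  rw [List.length_append, List.length_flatten, List.map_replicate, List.sum_replicate]
  simp only [List.length_cons, List.length_replicate, smul_eq_mul, List.length_singleton]
  obtain ⟨m, rfl⟩ : ∃ m, n = m + 2 := ⟨n - 2, by omega⟩
  have hsq : (m + 2) ^ 2 = m * m + 4 * m + 4 := by ring
  simp only [show m + 2 - 2 = m from by omega]
  rw [hsq]
  simp only [List.length_nil]
  have h3m : 3 * m ≤ m * m := Nat.mul_le_mul_right m (by omega)
  have hrw : m * (m + 1) = m * m + m := by ring
  rw [hrw]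
  generalize m * m = M at h3m ⊢
  omega
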